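/- For natural numbers n ≥ 1, m ≥ 0 and μ ≥ 0, D(n,−m;μ) = ∑_{l=0}^m C(m,l)·(μ−n)^{m−l}·D(1,−l;1) − ∑_{k=2}^n (ζ(k)−1)·(k+μ−n)^m, where D(a,−b;c) := ∑_{k=1}^∞ (ζ(a+k) − 1)·(k+c)^b and the sum over k is empty when n = 1. -/

import Mathlib

/-- The Riemann zeta function at a natural argument, `ζ(s) = ∑_{n=1}^∞ 1/n^s`. -/
noncomputable def zetaNat (s : ℕ) : ℝ := ∑' n : ℕ, 1 / ((n : ℝ) + 1) ^ s

/-- `D(a,−b;c) = ∑_{k=1}^∞ (ζ(a+k) − 1)(k+c)^b`. -/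
noncomputable def Dneg (a b c : ℕ) : ℝ := ∑' k : ℕ, (zetaNat (a + k + 1) - 1) * ((k : ℝ) + 1 + c) ^ b

lemma summable_aux1 (s : ℕ) (hs : 2 ≤ s) : Summable (fun n : ℕ => 1 / ((n : ℝ) + 1) ^ s) := by
  have h : Summable (fun n : ℕ => 1 / (n : ℝ) ^ s) :=
    Real.summable_one_div_nat_pow.2 (by omega)
  have := (summable_nat_add_iff (f := fun n : ℕ => 1 / (n : ℝ) ^ s) 1).2 h
  exact this.congr (fun n => by push_cast; ring_nf)

lemma summable_aux2 (s : ℕ) (hs : 2 ≤ s) : Summable (fun n : ℕ => 1 / ((n : ℝ) + 2) ^ s) := by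
  have h : Summable (fun n : ℕ => 1 / (n : ℝ) ^ s) :=
    Real.summable_one_div_nat_pow.2 (by omega)
  have := (summable_nat_add_iff (f := fun n : ℕ => 1 / (n : ℝ) ^ s) 2).2 h
  exact this.congr (fun n => by push_cast; ring_nf)

lemma zetaNat_sub_one (s : ℕ) (hs : 2 ≤ s) :
    zetaNat s - 1 = ∑' n : ℕ, 1 / ((n : ℝ) + 2) ^ s := by
  have h := summable_aux1 s hs
  have h0 : zetaNat s = 1 + ∑' n : ℕ, 1 / ((n : ℝ) + 2) ^ s := by
    unfold zetaNat
    rw [Summable.tsum_eq_zero_add h]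
    congr 1
    · norm_num
    · exact tsum_congr (fun n => by push_cast; rw [show ((n : ℝ) + 1 + 1) = (n : ℝ) + 2 by ring])
  rw [h0]
  ring

lemma zetaNat_sub_one_nonneg (s : ℕ) (hs : 2 ≤ s) : 0 ≤ zetaNat s - 1 := by
  rw [zetaNat_sub_one s hs]
  exact tsum_nonneg (fun n => by positivity)

lemma zetaNat_sub_one_le (k : ℕ) :
    zetaNat (k + 2) - 1 ≤ (zetaNat 2 - 1) * (1 / 2) ^ k := by
  rw [zetaNat_sub_one (k + 2) (by omega), zetaNat_sub_one 2 le_rfl, mul_comm, ← tsum_mul_left]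
  refine Summable.tsum_le_tsum (fun n => ?_) (summable_aux2 (k + 2) (by omega))
    ((summable_aux2 2 le_rfl).mul_left _)
  have hn2 : (2 : ℝ) ≤ (n : ℝ) + 2 := by linarith [(Nat.cast_nonneg n : (0:ℝ) ≤ n)]
  have h2 : (2 : ℝ) ^ k ≤ ((n : ℝ) + 2) ^ k := pow_le_pow_left₀ (by norm_num) hn2 k
  have key : 1 / ((n : ℝ) + 2) ^ k ≤ (1 / 2) ^ k := by
    rw [div_pow, one_pow]
    exact one_div_le_one_div_of_le (by positivity) h2
  calc 1 / ((n : ℝ) + 2) ^ (k + 2)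
      = (1 / ((n : ℝ) + 2) ^ k) * (1 / ((n : ℝ) + 2) ^ 2) := by
        rw [pow_add, div_mul_div_comm]; norm_num
    _ ≤ (1 / 2) ^ k * (1 / ((n : ℝ) + 2) ^ 2) :=
        mul_le_mul_of_nonneg_right key (by positivity)

lemma summable_poly_geom (m : ℕ) : Summable (fun k : ℕ => ((k : ℝ) + 1) ^ m * (1 / 2) ^ k) := by
  have h : Summable (fun k : ℕ => (k : ℝ) ^ m * (1 / 2) ^ k) :=
    summable_pow_mul_geometric_of_norm_lt_one m (by rw [Real.norm_eq_abs, abs_of_pos] <;> norm_num)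
  have h1 := (summable_nat_add_iff (f := fun k : ℕ => (k : ℝ) ^ m * (1 / 2) ^ k) 1).2 h
  have := h1.mul_left (2 : ℝ)
  exact this.congr (fun k => by push_cast; ring)

lemma summable_key (c : ℝ) (m : ℕ) :
    Summable (fun k : ℕ => (zetaNat (k + 2) - 1) * ((k : ℝ) + c) ^ m) := by
  refine Summable.of_norm_bounded
    (g := fun k => ((zetaNat 2 - 1) * (1 + |c|) ^ m) * (((k : ℝ) + 1) ^ m * (1 / 2) ^ k))
    (((summable_poly_geom m).mul_left _)) (fun k => ?_)
  have hz0 : 0 ≤ zetaNat (k + 2) - 1 := zetaNat_sub_one_nonneg _ (by omega)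
  have hz : zetaNat (k + 2) - 1 ≤ (zetaNat 2 - 1) * (1 / 2) ^ k := zetaNat_sub_one_le k
  have hb : |(k : ℝ) + c| ^ m ≤ ((1 + |c|) * ((k : ℝ) + 1)) ^ m := by
    apply pow_le_pow_left₀ (abs_nonneg _)
    calc |(k : ℝ) + c| ≤ |(k : ℝ)| + |c| := abs_add_le _ _
      _ = (k : ℝ) + |c| := by rw [abs_of_nonneg (Nat.cast_nonneg k)]
      _ ≤ (1 + |c|) * ((k : ℝ) + 1) := by nlinarith [abs_nonneg c, Nat.cast_nonneg (α := ℝ) k]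
  rw [norm_mul, Real.norm_eq_abs, Real.norm_eq_abs, abs_of_nonneg hz0]
  calc (zetaNat (k + 2) - 1) * |((k : ℝ) + c) ^ m|
      ≤ ((zetaNat 2 - 1) * (1 / 2) ^ k) * ((1 + |c|) * ((k : ℝ) + 1)) ^ m := by
        rw [abs_pow]
        apply mul_le_mul hz hb (by positivity)
        have := zetaNat_sub_one_nonneg 2 le_rfl
        positivity
    _ = (zetaNat 2 - 1) * (1 + |c|) ^ m * (((k : ℝ) + 1) ^ m * (1 / 2) ^ k) := by
        rw [mul_pow]; ring

/-- For `n ≥ 1`, `m ≥ 0`, `μ ≥ 0`: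
`D(n,−m;μ) = ∑_{l=0}^m C(m,l)(μ−n)^{m−l} D(1,−l;1) − ∑_{k=2}^n (ζ(k)−1)(k+μ−n)^m`. -/
theorem Dneg_reduction (n m μ : ℕ) (hn : 1 ≤ n) :
    Dneg n m μ =
      (∑ l ∈ Finset.range (m + 1),
        (m.choose l : ℝ) * ((μ : ℝ) - n) ^ (m - l) * Dneg 1 l 1) -
      ∑ k ∈ Finset.Icc 2 n, (zetaNat k - 1) * ((k : ℝ) + μ - n) ^ m := by
  set g : ℕ → ℝ := fun s => (zetaNat s - 1) * ((s : ℝ) + μ - n) ^ m with hg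
  -- Summability of shifted g
  have hg2 : Summable (fun k : ℕ => g (k + 2)) := by
    refine (summable_key (2 + (μ : ℝ) - n) m).congr (fun k => ?_)
    simp only [hg]
    push_cast
    ring_nf
  -- First RHS term equals ∑' k, g (k+2)
  have hfirst : (∑ l ∈ Finset.range (m + 1),
      (m.choose l : ℝ) * ((μ : ℝ) - n) ^ (m - l) * Dneg 1 l 1) = ∑' k : ℕ, g (k + 2) := by
    have hD : ∀ l : ℕ, Dneg 1 l 1 = ∑' k : ℕ, (zetaNat (k + 2) - 1) * ((k : ℝ) + 2) ^ l := by
      intro l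
      unfold Dneg
      refine tsum_congr (fun k => ?_)
      have : 1 + k + 1 = k + 2 := by omega
      rw [this]
      push_cast
      ring_nf
    calc (∑ l ∈ Finset.range (m + 1), (m.choose l : ℝ) * ((μ : ℝ) - n) ^ (m - l) * Dneg 1 l 1)
        = ∑ l ∈ Finset.range (m + 1), ∑' k : ℕ,
            (m.choose l : ℝ) * ((μ : ℝ) - n) ^ (m - l) *
              ((zetaNat (k + 2) - 1) * ((k : ℝ) + 2) ^ l) := by
          refine Finset.sum_congr rfl (fun l _ => ?_)
          rw [hD l, ← tsum_mul_left]
      _ = ∑' k : ℕ, ∑ l ∈ Finset.range (m + 1),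
            (m.choose l : ℝ) * ((μ : ℝ) - n) ^ (m - l) *
              ((zetaNat (k + 2) - 1) * ((k : ℝ) + 2) ^ l) := by
          refine (Summable.tsum_finsetSum (fun l _ => ?_)).symm
          exact ((summable_key 2 l).mul_left ((m.choose l : ℝ) * ((μ : ℝ) - n) ^ (m - l))).congr (fun k => by ring)
      _ = ∑' k : ℕ, g (k + 2) := by
          refine tsum_congr (fun k => ?_)
          have : g (k + 2) = (zetaNat (k + 2) - 1) *
              (((k : ℝ) + 2) + ((μ : ℝ) - n)) ^ m := by
            simp only [hg]; push_cast; ring_nf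
          rw [this, add_pow, Finset.mul_sum]
          refine Finset.sum_congr rfl (fun l _ => ?_)
          ring
  -- Split the tail
  have hsplit := Summable.sum_add_tsum_nat_add (f := fun k : ℕ => g (k + 2)) (n - 1) hg2
  -- LHS equals tail sum
  have hL : Dneg n m μ = ∑' k : ℕ, g (k + (n - 1) + 2) := by
    unfold Dneg
    refine tsum_congr (fun k => ?_)
    have h1 : k + (n - 1) + 2 = n + k + 1 := by omega
    rw [h1]
    simp only [hg]
    push_cast
    ring_nf
  -- Finite part equals the Icc sum
  have hF : (∑ i ∈ Finset.range (n - 1), g (i + 2)) =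
      ∑ k ∈ Finset.Icc 2 n, (zetaNat k - 1) * ((k : ℝ) + μ - n) ^ m := by
    have hIcc : Finset.Icc 2 n = Finset.Ico 2 (n + 1) := by
      rw [Nat.Icc_eq_range', Nat.Ico_eq_range']
    rw [hIcc, Finset.sum_Ico_eq_sum_range]
    have : n + 1 - 2 = n - 1 := by omega
    rw [this]
    refine Finset.sum_congr rfl (fun i _ => ?_)
    have : 2 + i = i + 2 := by omega
    rw [this]
  rw [hL, hfirst, ← hsplit]
  have e1 : (∑ i ∈ Finset.range (n - 1), (fun k => g (k + 2)) i) =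
      ∑ i ∈ Finset.range (n - 1), g (i + 2) := rfl
  have e2 : (∑' i : ℕ, (fun k => g (k + 2)) (i + (n - 1))) =
      ∑' k : ℕ, g (k + (n - 1) + 2) := rfl
  rw [e1, e2, hF]
  ring
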